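/- For the Wasserstein-type divergence W(Q1 ∥ Q2) = ‖μ1 - μ2‖² + trace(Σ1 + Σ2 - 2(Σ2^{1/2} Σ1 Σ2^{1/2})^{1/2}) between pairs (μ1,Σ1) and (μ2,Σ2) with Σ1, Σ2 positive semidefinite, one has W(Q1 ∥ Q2) ≥ 0, and W(Q1 ∥ Q2) = 0 if and only if μ1 = μ2 and Σ1 = Σ2. -/

import Mathlib

open Matrix

section

open scoped ComplexOrder

/-- The positive semidefinite square root of a positive semidefinite matrix
(the definition `Matrix.PosSemidef.sqrt` of the older Mathlib, removed since). -/
noncomputable def Matrix.PosSemidef.sqrt {n : Type*} [Fintype n] [DecidableEq n] {𝕜 : Type*}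
    [RCLike 𝕜] {A : Matrix n n 𝕜} (hA : A.PosSemidef) : Matrix n n 𝕜 :=
  hA.1.eigenvectorUnitary.1 * diagonal ((↑) ∘ (fun x : ℝ => √x) ∘ hA.1.eigenvalues) *
    (star hA.1.eigenvectorUnitary : Matrix n n 𝕜)

end

section

open scoped MatrixOrder

private lemma psd_sqrt_eq_cfc {d : ℕ} {A : Matrix (Fin d) (Fin d) ℝ} (hA : A.PosSemidef) :
    hA.sqrt = CFC.sqrt A := by
  rw [CFC.sqrt_eq_real_sqrt A hA.nonneg, cfcₙ_eq_cfc (hf0 := Real.sqrt_zero),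
    hA.1.cfc_eq, Matrix.IsHermitian.cfc, Unitary.conjStarAlgAut_apply]
  rfl

lemma Matrix.PosSemidef.posSemidef_sqrt {d : ℕ} {A : Matrix (Fin d) (Fin d) ℝ}
    (hA : A.PosSemidef) : hA.sqrt.PosSemidef := by
  rw [psd_sqrt_eq_cfc]
  exact (CFC.sqrt_nonneg A).posSemidef

lemma Matrix.PosSemidef.sqrt_mul_self {d : ℕ} {A : Matrix (Fin d) (Fin d) ℝ}
    (hA : A.PosSemidef) : hA.sqrt * hA.sqrt = A := by
  rw [psd_sqrt_eq_cfc]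
  exact CFC.sqrt_mul_sqrt_self A hA.nonneg

lemma Matrix.PosSemidef.eq_sqrt_of_sq_eq {d : ℕ} {A B : Matrix (Fin d) (Fin d) ℝ}
    (hA : A.PosSemidef) (hB : B.PosSemidef) (h : A ^ 2 = B) : A = hB.sqrt := by
  rw [psd_sqrt_eq_cfc]
  exact (CFC.sqrt_unique (by rw [← sq]; exact h) hA.nonneg).symm

end

private lemma trace_ctm_nonneg {d : ℕ} (N : Matrix (Fin d) (Fin d) ℝ) : 0 ≤ (Nᴴ * N).trace := by
  rw [Matrix.trace]
  refine Finset.sum_nonneg fun i _ => ?_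
  simp only [Matrix.diag_apply, Matrix.mul_apply, Matrix.conjTranspose_apply, star_trivial]
  exact Finset.sum_nonneg fun j _ => mul_self_nonneg _

private lemma eq_zero_of_trace_ctm {d : ℕ} (N : Matrix (Fin d) (Fin d) ℝ)
    (h : (Nᴴ * N).trace = 0) : N = 0 := by
  ext i j
  have h' : ∀ k ∈ Finset.univ, (0:ℝ) ≤ (Nᴴ * N).diag k := fun k _ => by
    simp only [Matrix.diag_apply, Matrix.mul_apply, Matrix.conjTranspose_apply, star_trivial]
    exact Finset.sum_nonneg fun j _ => mul_self_nonneg _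
  rw [Matrix.trace, Finset.sum_eq_zero_iff_of_nonneg h'] at h
  have hj := h j (Finset.mem_univ j)
  simp only [Matrix.diag_apply, Matrix.mul_apply, Matrix.conjTranspose_apply, star_trivial] at hj
  have h2 : ∀ k ∈ Finset.univ, (0:ℝ) ≤ N k j * N k j := fun k _ => mul_self_nonneg _
  rw [Finset.sum_eq_zero_iff_of_nonneg h2] at hj
  have := hj i (Finset.mem_univ i)
  simpa [mul_self_eq_zero] using this

private lemma wass_key {d : ℕ} (S₁ S₂ : Matrix (Fin d) (Fin d) ℝ)
    (hS₁ : S₁.PosSemidef) (hS₂ : S₂.PosSemidef)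
    (hC : (hS₂.sqrt * S₁ * hS₂.sqrt).PosSemidef) :
    0 ≤ Matrix.trace (S₁ + S₂ - (2 : ℝ) • hC.sqrt) ∧
      (Matrix.trace (S₁ + S₂ - (2 : ℝ) • hC.sqrt) = 0 → S₁ = S₂) := by
  classical
  set A := hS₁.sqrt with hAdef
  set B := hS₂.sqrt with hBdef
  set T := hC.sqrt with hTdef
  have hT : T.PosSemidef := hC.posSemidef_sqrt
  have hAH : Aᴴ = A := hS₁.posSemidef_sqrt.1
  have hBH : Bᴴ = B := hS₂.posSemidef_sqrt.1
  have hAA : A * A = S₁ := hS₁.sqrt_mul_self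
  have hBB : B * B = S₂ := hS₂.sqrt_mul_self
  have hTT : T * T = B * S₁ * B := hC.sqrt_mul_self
  set μ := hT.1.eigenvalues with hμdef
  set P : Matrix (Fin d) (Fin d) ℝ := (hT.1.eigenvectorUnitary : Matrix (Fin d) (Fin d) ℝ)
    with hPdef
  have hP1 : Pᴴ * P = 1 := by
    rw [hPdef, ← Matrix.star_eq_conjTranspose]
    exact Unitary.coe_star_mul_self hT.1.eigenvectorUnitary
  have hP2 : P * Pᴴ = 1 := by
    rw [hPdef, ← Matrix.star_eq_conjTranspose]
    exact Unitary.coe_mul_star_self hT.1.eigenvectorUnitary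
  have hdiag : Pᴴ * T * P = Matrix.diagonal μ := by
    rw [hPdef, hμdef, ← Matrix.star_eq_conjTranspose]
    have := Matrix.IsHermitian.conjStarAlgAut_star_eigenvectorUnitary hT.1
    simpa [Function.comp, Unitary.conjStarAlgAut_star_apply] using this
  have hc1 : ∀ X : Matrix (Fin d) (Fin d) ℝ, P * (Pᴴ * X) = X := fun X => by
    rw [← mul_assoc, hP2, one_mul]
  have hc2 : ∀ X : Matrix (Fin d) (Fin d) ℝ, Pᴴ * (P * X) = X := fun X => by
    rw [← mul_assoc, hP1, one_mul]
  have hAA' : ∀ X : Matrix (Fin d) (Fin d) ℝ, A * (A * X) = S₁ * X := fun X => by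
    rw [← mul_assoc, hAA]
  have hBB' : ∀ X : Matrix (Fin d) (Fin d) ℝ, B * (B * X) = S₂ * X := fun X => by
    rw [← mul_assoc, hBB]
  clear_value A B T μ P
  have hTspec : T = P * (Matrix.diagonal μ * Pᴴ) := by
    have h := congrArg (fun X => P * X * Pᴴ) hdiag
    simp only [mul_assoc, hc1] at h
    rw [hP2, mul_one] at h
    exact h
  set g : Fin d → ℝ := fun i => if μ i = 0 then 0 else (μ i)⁻¹ with hgdef
  set E : Matrix (Fin d) (Fin d) ℝ := Matrix.diagonal g with hEdef
  have hEH : Eᴴ = E := by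
    rw [hEdef, Matrix.diagonal_conjTranspose]
    rw [Matrix.diagonal_eq_diagonal_iff]
    intro i
    exact star_trivial _
  set ind : Fin d → ℝ := fun i => if μ i = 0 then 0 else 1 with hinddef
  set Q : Matrix (Fin d) (Fin d) ℝ := A * (B * (P * E)) with hQdef
  clear_value g E ind Q
  have hBSB : B * (S₁ * (B * P)) = T * (T * P) := by
    calc B * (S₁ * (B * P)) = B * S₁ * B * P := by simp only [mul_assoc]
    _ = T * T * P := by rw [hTT]
    _ = T * (T * P) := by rw [mul_assoc]
  have F2 : Pᴴ * (B * (S₁ * (B * P))) = Matrix.diagonal (fun i => μ i * μ i) := by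
    rw [hBSB, hTspec]
    simp only [mul_assoc, hc1, hc2]
    rw [hP1, mul_one, Matrix.diagonal_mul_diagonal]
  have hQH : Qᴴ = E * (Pᴴ * (B * A)) := by
    rw [hQdef, Matrix.conjTranspose_mul, Matrix.conjTranspose_mul, Matrix.conjTranspose_mul,
      hAH, hBH, hEH, mul_assoc, mul_assoc]
  have F4 : Qᴴ * (A * (B * P)) = Matrix.diagonal μ := by
    rw [hQH]
    simp only [mul_assoc, hAA']
    rw [F2, hEdef, Matrix.diagonal_mul_diagonal]
    rw [Matrix.diagonal_eq_diagonal_iff]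
    intro i
    by_cases h : μ i = 0 <;> simp [hgdef, h]
  have F3 : Qᴴ * Q = Matrix.diagonal ind := by
    rw [hQH, hQdef]
    simp only [mul_assoc, hAA']
    have step : Pᴴ * (B * (S₁ * (B * (P * E)))) = Matrix.diagonal (fun i => μ i * μ i) * E := by
      calc Pᴴ * (B * (S₁ * (B * (P * E)))) = Pᴴ * (B * (S₁ * (B * P))) * E := by
            simp only [mul_assoc]
      _ = _ := by rw [F2]
    rw [step, hEdef, Matrix.diagonal_mul_diagonal, Matrix.diagonal_mul_diagonal]
    rw [Matrix.diagonal_eq_diagonal_iff]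
    intro i
    by_cases h : μ i = 0 <;> simp [hgdef, hinddef, h]
  have F6 : Q * Matrix.diagonal ind = Q := by
    rw [hQdef]
    simp only [mul_assoc]
    have hEI : E * Matrix.diagonal ind = E := by
      rw [hEdef, Matrix.diagonal_mul_diagonal]
      rw [Matrix.diagonal_eq_diagonal_iff]
      intro i
      by_cases h : μ i = 0 <;> simp [hgdef, hinddef, h]
    rw [hEI]
  have F5 : T.trace = (Matrix.diagonal μ).trace := by
    rw [hTspec, Matrix.trace_mul_comm, mul_assoc, hP1, mul_one]
  have idem : Q * Qᴴ * (Q * Qᴴ) = Q * Qᴴ := by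
    calc Q * Qᴴ * (Q * Qᴴ) = Q * (Qᴴ * Q) * Qᴴ := by simp only [mul_assoc]
    _ = Q * Matrix.diagonal ind * Qᴴ := by rw [F3]
    _ = Q * Qᴴ := by rw [F6]
  have c1 : ((A * Q)ᴴ * (A * Q)).trace = (S₁ * (Q * Qᴴ)).trace := by
    have e1 : (A * Q)ᴴ * (A * Q) = Qᴴ * (S₁ * Q) := by
      rw [Matrix.conjTranspose_mul, hAH, mul_assoc, hAA']
    rw [e1, Matrix.trace_mul_comm, mul_assoc]
  have c2 : ((A * Q)ᴴ * (B * P)).trace = (Matrix.diagonal μ).trace := by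
    have e2 : (A * Q)ᴴ * (B * P) = Qᴴ * (A * (B * P)) := by
      rw [Matrix.conjTranspose_mul, hAH, mul_assoc]
    rw [e2, F4]
  have c3 : ((B * P)ᴴ * (A * Q)).trace = (Matrix.diagonal μ).trace := by
    have e3 : (B * P)ᴴ * (A * Q) = ((A * Q)ᴴ * (B * P))ᴴ := by
      conv_rhs => rw [Matrix.conjTranspose_mul, Matrix.conjTranspose_conjTranspose]
    rw [e3, Matrix.trace_conjTranspose, c2, star_trivial]
  have c4 : ((B * P)ᴴ * (B * P)).trace = S₂.trace := by
    have e4 : (B * P)ᴴ * (B * P) = Pᴴ * (S₂ * P) := by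
      rw [Matrix.conjTranspose_mul, hBH, mul_assoc, hBB']
    rw [e4, Matrix.trace_mul_comm, mul_assoc, hP2, mul_one]
  have t1eq : ((A * Q - B * P)ᴴ * (A * Q - B * P)).trace =
      (S₁ * (Q * Qᴴ)).trace - (Matrix.diagonal μ).trace -
        ((Matrix.diagonal μ).trace - S₂.trace) := by
    rw [Matrix.conjTranspose_sub, sub_mul, mul_sub, mul_sub]
    rw [Matrix.trace_sub, Matrix.trace_sub, Matrix.trace_sub, c1, c2, c3, c4]
  have d1 : (Aᴴ * A).trace = S₁.trace := by rw [hAH, hAA]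
  have d2 : (Aᴴ * (A * (Q * Qᴴ))).trace = (S₁ * (Q * Qᴴ)).trace := by
    rw [hAH, hAA']
  have d3 : ((A * (Q * Qᴴ))ᴴ * A).trace = (S₁ * (Q * Qᴴ)).trace := by
    have e : (A * (Q * Qᴴ))ᴴ * A = Q * (Qᴴ * (A * A)) := by
      rw [Matrix.conjTranspose_mul, Matrix.conjTranspose_mul,
        Matrix.conjTranspose_conjTranspose, hAH, mul_assoc, mul_assoc]
    rw [e, hAA, Matrix.trace_mul_comm, mul_assoc, Matrix.trace_mul_comm, mul_assoc]
  have d4 : ((A * (Q * Qᴴ))ᴴ * (A * (Q * Qᴴ))).trace = (S₁ * (Q * Qᴴ)).trace := by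
    have e : (A * (Q * Qᴴ))ᴴ * (A * (Q * Qᴴ)) = (Q * Qᴴ) * (S₁ * (Q * Qᴴ)) := by
      rw [Matrix.conjTranspose_mul, Matrix.conjTranspose_mul,
        Matrix.conjTranspose_conjTranspose, hAH]
      rw [mul_assoc, mul_assoc, hAA', ← mul_assoc]
    rw [e, Matrix.trace_mul_comm, mul_assoc, idem]
  have t2eq : ((A - A * (Q * Qᴴ))ᴴ * (A - A * (Q * Qᴴ))).trace =
      S₁.trace - (S₁ * (Q * Qᴴ)).trace -
        ((S₁ * (Q * Qᴴ)).trace - (S₁ * (Q * Qᴴ)).trace) := by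
    rw [Matrix.conjTranspose_sub, sub_mul, mul_sub, mul_sub]
    rw [Matrix.trace_sub, Matrix.trace_sub, Matrix.trace_sub, d1, d2, d3, d4]
  have hmain : Matrix.trace (S₁ + S₂ - (2 : ℝ) • T) =
      ((A * Q - B * P)ᴴ * (A * Q - B * P)).trace +
        ((A - A * (Q * Qᴴ))ᴴ * (A - A * (Q * Qᴴ))).trace := by
    rw [Matrix.trace_sub, Matrix.trace_add, Matrix.trace_smul, t1eq, t2eq, smul_eq_mul, F5]
    ring
  have hpos1 := trace_ctm_nonneg (A * Q - B * P)
  have hpos2 := trace_ctm_nonneg (A - A * (Q * Qᴴ))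
  constructor
  · rw [hmain]; linarith
  · intro h0
    rw [hmain] at h0
    have hz1 : ((A * Q - B * P)ᴴ * (A * Q - B * P)).trace = 0 := by linarith
    have hz2 : ((A - A * (Q * Qᴴ))ᴴ * (A - A * (Q * Qᴴ))).trace = 0 := by linarith
    have hN1 : A * Q = B * P := by
      have := eq_zero_of_trace_ctm _ hz1
      rwa [sub_eq_zero] at this
    have hN2 : A = A * (Q * Qᴴ) := by
      have := eq_zero_of_trace_ctm _ hz2
      rwa [sub_eq_zero] at this
    have hQA : Qᴴ * A = Pᴴ * B := by
      have h := congrArg Matrix.conjTranspose hN1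
      rw [Matrix.conjTranspose_mul, Matrix.conjTranspose_mul, hAH, hBH] at h
      exact h
    calc S₁ = A * A := hAA.symm
    _ = (A * (Q * Qᴴ)) * A := by rw [← hN2]
    _ = A * Q * (Qᴴ * A) := by simp only [mul_assoc]
    _ = B * P * (Pᴴ * B) := by rw [hN1, hQA]
    _ = B * (P * (Pᴴ * B)) := by rw [mul_assoc]
    _ = B * B := by rw [hc1]
    _ = S₂ := hBB

/-- The Wasserstein-type divergence
`W(Q₁ ∥ Q₂) = ‖μ₁ - μ₂‖² + tr(S₁ + S₂ - 2 (S₂^{1/2} S₁ S₂^{1/2})^{1/2})` is nonnegative,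
and it vanishes iff `μ₁ = μ₂` and `S₁ = S₂`. -/
theorem stmt_8 {d : ℕ} (μ₁ μ₂ : EuclideanSpace ℝ (Fin d))
    (S₁ S₂ : Matrix (Fin d) (Fin d) ℝ) (hS₁ : S₁.PosSemidef) (hS₂ : S₂.PosSemidef)
    (hC : (hS₂.sqrt * S₁ * hS₂.sqrt).PosSemidef) :
    0 ≤ ‖μ₁ - μ₂‖ ^ 2 + Matrix.trace (S₁ + S₂ - (2 : ℝ) • hC.sqrt) ∧
      (‖μ₁ - μ₂‖ ^ 2 + Matrix.trace (S₁ + S₂ - (2 : ℝ) • hC.sqrt) = 0 ↔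
        μ₁ = μ₂ ∧ S₁ = S₂) := by
  obtain ⟨hge, himp⟩ := wass_key S₁ S₂ hS₁ hS₂ hC
  have hnorm : (0:ℝ) ≤ ‖μ₁ - μ₂‖ ^ 2 := sq_nonneg _
  refine ⟨by linarith, ?_, ?_⟩
  · intro h
    have h2 : Matrix.trace (S₁ + S₂ - (2 : ℝ) • hC.sqrt) = 0 := by linarith
    have h1 : ‖μ₁ - μ₂‖ ^ 2 = 0 := by linarith
    have h1' : μ₁ = μ₂ := by
      have := pow_eq_zero_iff (n := 2) (by norm_num) |>.mp h1
      rwa [norm_eq_zero, sub_eq_zero] at this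
    exact ⟨h1', himp h2⟩
  · rintro ⟨h1, h2⟩
    subst h2
    subst h1
    set Bm := hS₂.sqrt with hBm
    have hB : Bm * Bm = S₁ := hS₂.sqrt_mul_self
    have hsq : S₁ ^ 2 = Bm * S₁ * Bm := by
      rw [← hB, pow_two]
      simp only [mul_assoc]
    have hTS : S₁ = hC.sqrt := hS₂.eq_sqrt_of_sq_eq hC hsq
    rw [← hTS]
    simp [two_smul]
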